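/- Let B be an n×n similarity matrix with scaling factor ρ > 1 and let D ⊂ ℝⁿ be a finite set with 0 ∈ D whose similarity dimension s = log(card D)/log ρ satisfies s ≤ n. Then D⁺(μ) = ∞ if and only if E_s⁺(μ) = ∞. -/

import Mathlib

open MeasureTheory Filter
open scoped ENNReal

/-- The upper Beurling density of a positive Borel measure on ℝⁿ. -/
noncomputable def beurlingUpper {n : ℕ} (ν : Measure (EuclideanSpace ℝ (Fin n))) : ℝ≥0∞ :=
  Filter.limsup (fun N : ℝ =>
    ⨆ z : EuclideanSpace ℝ (Fin n),
      ν {y | ∀ i, |y i - z i| ≤ N / 2} / ENNReal.ofReal (N ^ n)) Filter.atTop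

/-- The upper `s`-density of a positive Borel measure on ℝⁿ. -/
noncomputable def upperSDensity {n : ℕ} (s : ℝ)
    (ν : Measure (EuclideanSpace ℝ (Fin n))) : ℝ≥0∞ :=
  Filter.limsup (fun r : ℝ =>
    ⨆ (U : Set (EuclideanSpace ℝ (Fin n))) (_ : IsCompact U) (_ : Convex ℝ U)
      (_ : r ≤ Metric.diam U), ν U / EMetric.diam U ^ s) Filter.atTop

/-- The measure `μ = sup_N μ_N` associated with the pair `(B, D)`. -/
noncomputable def selfAffineMeasure {n : ℕ} (B : Matrix (Fin n) (Fin n) ℝ)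
    (D : Finset (EuclideanSpace ℝ (Fin n))) : Measure (EuclideanSpace ℝ (Fin n)) :=
  ⨆ N : ℕ, Measure.sum (fun f : Fin N → D =>
    Measure.dirac (∑ j : Fin N, Matrix.toEuclideanLin (B ^ (j : ℕ)) (f j)))

namespace SelfAffineAux
open Bornology

variable {n : ℕ} (B : Matrix (Fin n) (Fin n) ℝ) (D : Finset (EuclideanSpace ℝ (Fin n)))

local notation "E" => EuclideanSpace ℝ (Fin n)

lemma toEucl_one (x : E) : Matrix.toEuclideanLin (1 : Matrix (Fin n) (Fin n) ℝ) x = x := by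
  simp [Matrix.toEuclideanLin_apply, Matrix.one_mulVec]

lemma toEucl_mul (A C : Matrix (Fin n) (Fin n) ℝ) (x : E) :
    Matrix.toEuclideanLin (A * C) x = Matrix.toEuclideanLin A (Matrix.toEuclideanLin C x) := by
  simp [Matrix.toEuclideanLin_apply, Matrix.mulVec_mulVec]

lemma cont_toEucl (A : Matrix (Fin n) (Fin n) ℝ) :
    Continuous (fun x : E => Matrix.toEuclideanLin A x) :=
  (Matrix.toEuclideanLin A).continuous_of_finiteDimensional

/-- The `N`-th approximation measure. -/
noncomputable def muN (N : ℕ) : Measure E :=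
  Measure.sum (fun f : Fin N → D =>
    Measure.dirac (∑ j : Fin N, Matrix.toEuclideanLin (B ^ (j : ℕ)) (f j)))

lemma selfAffine_eq : selfAffineMeasure B D = ⨆ N : ℕ, muN B D N := rfl

lemma cons_sum (N : ℕ) (d : D) (g : Fin N → D) :
    ∑ j : Fin (N + 1), Matrix.toEuclideanLin (B ^ (j : ℕ)) ((Fin.cons d g : Fin (N+1) → D) j : E)
      = Matrix.toEuclideanLin B (∑ j : Fin N, Matrix.toEuclideanLin (B ^ (j : ℕ)) (g j : E))
        + (d : E) := by
  rw [Fin.sum_univ_succ, map_sum]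
  simp only [Fin.cons_zero, Fin.cons_succ, Fin.val_succ, Fin.val_zero, pow_zero, toEucl_one]
  rw [add_comm]
  congr 1
  refine Finset.sum_congr rfl fun j _ => ?_
  rw [pow_succ', toEucl_mul]

lemma muN_succ_le (N : ℕ) :
    muN B D (N + 1) ≤ ∑ d : D, (muN B D N).map (fun x => Matrix.toEuclideanLin B x + (d : E)) := by
  rw [Measure.le_iff]
  intro A hA
  have hmeas : ∀ d : D, Measurable (fun x : E => Matrix.toEuclideanLin B x + (d : E)) :=
    fun d => ((cont_toEucl B).add continuous_const).measurable
  have hR : (∑ d : D, (muN B D N).map (fun x => Matrix.toEuclideanLin B x + (d : E))) A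
      = ∑ d : D, ∑ g : Fin N → D,
          A.indicator (1 : E → ℝ≥0∞) (Matrix.toEuclideanLin B
            (∑ j : Fin N, Matrix.toEuclideanLin (B ^ (j : ℕ)) (g j : E)) + (d : E)) := by
    rw [Measure.finset_sum_apply]
    refine Finset.sum_congr rfl fun d _ => ?_
    rw [Measure.map_apply (hmeas d) hA, muN, Measure.sum_apply _ ((hmeas d) hA), tsum_fintype]
    refine Finset.sum_congr rfl fun g _ => ?_
    have hmd : Measure.dirac (∑ j : Fin N, Matrix.toEuclideanLin (B ^ (j : ℕ)) (g j : E))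
        ((fun x => Matrix.toEuclideanLin B x + (d : E)) ⁻¹' A)
        = ((Measure.dirac (∑ j : Fin N, Matrix.toEuclideanLin (B ^ (j : ℕ)) (g j : E))).map
            (fun x => Matrix.toEuclideanLin B x + (d : E))) A :=
      (Measure.map_apply (hmeas d) hA).symm
    rw [hmd, Measure.map_dirac' (hmeas d), Measure.dirac_apply' _ hA]
  have hL : (muN B D (N + 1)) A
      = ∑ f : Fin (N + 1) → D,
          A.indicator (1 : E → ℝ≥0∞)
            (∑ j : Fin (N + 1), Matrix.toEuclideanLin (B ^ (j : ℕ)) (f j : E)) := by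
    rw [muN, Measure.sum_apply _ hA, tsum_fintype]
    exact Finset.sum_congr rfl fun f _ => Measure.dirac_apply' _ hA
  have e1 : (∑ dg : D × (Fin N → D),
      A.indicator (1 : E → ℝ≥0∞) (Matrix.toEuclideanLin B
        (∑ j : Fin N, Matrix.toEuclideanLin (B ^ (j : ℕ)) (dg.2 j : E)) + (dg.1 : E)))
      = ∑ f : Fin (N + 1) → D,
          A.indicator (1 : E → ℝ≥0∞)
            (∑ j : Fin (N + 1), Matrix.toEuclideanLin (B ^ (j : ℕ)) (f j : E)) := by
    refine Fintype.sum_equiv (Fin.consEquiv fun _ : Fin (N+1) => (D : Type _)) _ _ fun dg => ?_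
    simp only [Fin.consEquiv_apply]
    rw [cons_sum]
  rw [hL, hR, ← e1]
  exact le_of_eq (Fintype.sum_prod_type _)

lemma step_le (hD0 : (0 : E) ∈ D) :
    selfAffineMeasure B D ≤
      ∑ d : D, (selfAffineMeasure B D).map (fun x => Matrix.toEuclideanLin B x + (d : E)) := by
  have hmeas : ∀ d : D, Measurable (fun x : E => Matrix.toEuclideanLin B x + (d : E)) :=
    fun d => ((cont_toEucl B).add continuous_const).measurable
  rw [selfAffine_eq]
  refine iSup_le fun N => ?_
  rw [Measure.le_iff]
  intro A hA
  have hsum : (∑ d : D, (⨆ N : ℕ, muN B D N).map (fun x => Matrix.toEuclideanLin B x + (d : E))) A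
      = ∑ d : D, (⨆ N : ℕ, muN B D N) ((fun x => Matrix.toEuclideanLin B x + (d : E)) ⁻¹' A) := by
    rw [Measure.finset_sum_apply]
    exact Finset.sum_congr rfl fun d _ => Measure.map_apply (hmeas d) hA
  rw [hsum]
  cases N with
  | zero =>
      have h0 : ∀ S : Set E, MeasurableSet S → (muN B D 0) S = Measure.dirac (0 : E) S := by
        intro S hS
        rw [muN, Measure.sum_apply _ hS, tsum_fintype, Fintype.sum_unique]
        simp
      rw [h0 A hA]
      have hd0 : ((⟨0, hD0⟩ : D) : E) = (0 : E) := rfl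
      have hkey : Measure.dirac (0 : E) A ≤
          (⨆ N : ℕ, muN B D N) ((fun x => Matrix.toEuclideanLin B x + ((⟨0, hD0⟩ : D) : E)) ⁻¹' A) := by
        have hmem : MeasurableSet ((fun x => Matrix.toEuclideanLin B x + ((⟨0, hD0⟩ : D) : E)) ⁻¹' A) :=
          (hmeas ⟨0, hD0⟩) hA
        refine le_trans ?_ ((Measure.le_iff'.mp (le_iSup (fun N : ℕ => muN B D N) 0)) _)
        rw [h0 _ hmem, Measure.dirac_apply' _ hA, Measure.dirac_apply' _ hmem]
        by_cases h : (0 : E) ∈ A <;>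
          simp [Set.indicator_apply, Set.mem_preimage, h]
      exact hkey.trans (Finset.single_le_sum (f := fun d : D =>
        (⨆ N : ℕ, muN B D N) ((fun x => Matrix.toEuclideanLin B x + (d : E)) ⁻¹' A))
        (fun _ _ => zero_le) (Finset.mem_univ _))
  | succ N =>
      refine le_trans (Measure.le_iff.mp (muN_succ_le B D N) A hA) ?_
      have hsum2 : (∑ d : D, (muN B D N).map (fun x => Matrix.toEuclideanLin B x + (d : E))) A
          = ∑ d : D, (muN B D N) ((fun x => Matrix.toEuclideanLin B x + (d : E)) ⁻¹' A) := by
        rw [Measure.finset_sum_apply]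
        exact Finset.sum_congr rfl fun d _ => Measure.map_apply (hmeas d) hA
      rw [hsum2]
      exact Finset.sum_le_sum fun d _ =>
        Measure.le_iff'.mp (le_iSup (fun N : ℕ => muN B D N) N) _

lemma iter_le (hD0 : (0 : E) ∈ D) (k : ℕ) (A : Set E) (hA : MeasurableSet A) :
    selfAffineMeasure B D A ≤ ∑ f : Fin k → D,
      selfAffineMeasure B D ((fun x => Matrix.toEuclideanLin (B ^ k) x
        + ∑ j : Fin k, Matrix.toEuclideanLin (B ^ (j : ℕ)) (f j : E)) ⁻¹' A) := by
  induction k generalizing A with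
  | zero =>
      rw [Fintype.sum_unique]
      have hpre : (fun x : E => Matrix.toEuclideanLin (B ^ 0) x
          + ∑ j : Fin 0, Matrix.toEuclideanLin (B ^ (j : ℕ))
            ((default : Fin 0 → D) j : E)) ⁻¹' A = A := by
        ext x
        simp [pow_zero, toEucl_one]
      rw [hpre]
  | succ k ih =>
      have hmeas : ∀ d : D, Measurable (fun x : E => Matrix.toEuclideanLin B x + (d : E)) :=
        fun d => ((cont_toEucl B).add continuous_const).measurable
      have h1 : selfAffineMeasure B D A ≤ ∑ d : D,
          selfAffineMeasure B D ((fun x => Matrix.toEuclideanLin B x + (d : E)) ⁻¹' A) := by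
        have h := Measure.le_iff'.mp (step_le B D hD0) A
        rwa [Measure.finset_sum_apply,
          Finset.sum_congr rfl (fun d _ => Measure.map_apply (hmeas d) hA)] at h
      refine h1.trans ?_
      refine (Finset.sum_le_sum fun d _ => ih _ ((hmeas d) hA)).trans (le_of_eq ?_)
      have e1 : ∑ dg : D × (Fin k → D),
          selfAffineMeasure B D ((fun x => Matrix.toEuclideanLin (B ^ k) x
            + ∑ j : Fin k, Matrix.toEuclideanLin (B ^ (j : ℕ)) (dg.2 j : E)) ⁻¹'
              ((fun x => Matrix.toEuclideanLin B x + (dg.1 : E)) ⁻¹' A))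
          = ∑ f : Fin (k+1) → D,
              selfAffineMeasure B D ((fun x => Matrix.toEuclideanLin (B ^ (k+1)) x
                + ∑ j : Fin (k+1), Matrix.toEuclideanLin (B ^ (j : ℕ)) (f j : E)) ⁻¹' A) := by
        refine Fintype.sum_equiv (Fin.consEquiv fun _ : Fin (k+1) => (D : Type _)) _ _ fun dg => ?_
        congr 1
        rw [Set.preimage_preimage]
        ext x
        simp only [Set.mem_preimage, Fin.consEquiv_apply]
        rw [cons_sum]
        have hpt : Matrix.toEuclideanLin B (Matrix.toEuclideanLin (B ^ k) x
              + ∑ j : Fin k, Matrix.toEuclideanLin (B ^ (j : ℕ)) (dg.2 j : E)) + (dg.1 : E)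
            = Matrix.toEuclideanLin (B ^ (k+1)) x
              + (Matrix.toEuclideanLin B
                  (∑ j : Fin k, Matrix.toEuclideanLin (B ^ (j : ℕ)) (dg.2 j : E)) + (dg.1 : E)) := by
          rw [map_add, pow_succ', toEucl_mul, add_assoc]
        rw [hpt]
      exact (Fintype.sum_prod_type _).symm.trans e1

variable {ρ : ℝ}

lemma norm_phi (hsim : ∀ x : E, ‖Matrix.toEuclideanLin B x‖ = ρ * ‖x‖) (k : ℕ) (x : E) :
    ‖Matrix.toEuclideanLin (B ^ k) x‖ = ρ ^ k * ‖x‖ := by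
  induction k with
  | zero => simp [toEucl_one]
  | succ k ih =>
      rw [pow_succ', toEucl_mul, hsim, ih, pow_succ]
      ring

lemma mu_bound (hρ : 1 < ρ) (hsim : ∀ x : E, ‖Matrix.toEuclideanLin B x‖ = ρ * ‖x‖)
    (hD0 : (0 : E) ∈ D) (k : ℕ) (A : Set E) (hA : MeasurableSet A) (hb : IsBounded A)
    (hdiam : Metric.diam A ≤ ρ ^ k) :
    selfAffineMeasure B D A ≤ (D.card : ℝ≥0∞) ^ k *
      ⨆ z : E, selfAffineMeasure B D (Metric.closedBall z 1) := by
  refine (iter_le B D hD0 k A hA).trans ?_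
  have hterm : ∀ f : Fin k → D,
      selfAffineMeasure B D ((fun x => Matrix.toEuclideanLin (B ^ k) x
        + ∑ j : Fin k, Matrix.toEuclideanLin (B ^ (j : ℕ)) (f j : E)) ⁻¹' A)
      ≤ ⨆ z : E, selfAffineMeasure B D (Metric.closedBall z 1) := by
    intro f
    set c : E := ∑ j : Fin k, Matrix.toEuclideanLin (B ^ (j : ℕ)) (f j : E) with hc
    set P : Set E := (fun x => Matrix.toEuclideanLin (B ^ k) x + c) ⁻¹' A with hP
    rcases P.eq_empty_or_nonempty with h | ⟨x₀, hx₀⟩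
    · rw [h, measure_empty]
      exact zero_le
    · have hsub : P ⊆ Metric.closedBall x₀ 1 := by
        intro y hy
        have h1 : dist (Matrix.toEuclideanLin (B ^ k) y + c)
            (Matrix.toEuclideanLin (B ^ k) x₀ + c) ≤ Metric.diam A :=
          Metric.dist_le_diam_of_mem hb hy hx₀
        have h2 : dist (Matrix.toEuclideanLin (B ^ k) y + c)
            (Matrix.toEuclideanLin (B ^ k) x₀ + c) = ρ ^ k * dist y x₀ := by
          rw [dist_add_right, dist_eq_norm, ← map_sub, norm_phi B hsim, ← dist_eq_norm]
        rw [Metric.mem_closedBall]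
        have hρk : (0 : ℝ) < ρ ^ k := by positivity
        have := h1.trans hdiam
        rw [h2] at this
        calc dist y x₀ = (ρ ^ k * dist y x₀) / ρ ^ k := by field_simp
          _ ≤ ρ ^ k / ρ ^ k := by gcongr
          _ = 1 := by field_simp
      exact (measure_mono hsub).trans
        (le_iSup (fun z => selfAffineMeasure B D (Metric.closedBall z 1)) x₀)
  calc ∑ f : Fin k → D, selfAffineMeasure B D _
      ≤ ∑ _f : Fin k → D, ⨆ z : E, selfAffineMeasure B D (Metric.closedBall z 1) :=
        Finset.sum_le_sum fun f _ => hterm f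
    _ = (D.card : ℝ≥0∞) ^ k * ⨆ z : E, selfAffineMeasure B D (Metric.closedBall z 1) := by
        rw [Finset.sum_const, Finset.card_univ, nsmul_eq_mul]
        congr 1
        rw [Fintype.card_fun, Fintype.card_coe, Fintype.card_fin]
        push_cast
        ring

lemma card_rpow (hρ : 1 < ρ) (hD0 : (0 : E) ∈ D) {s : ℝ}
    (hs : s = Real.log D.card / Real.log ρ) : ρ ^ s = (D.card : ℝ) := by
  have hc : (0 : ℝ) < D.card := by exact_mod_cast Finset.card_pos.mpr ⟨0, hD0⟩
  have hlρ : Real.log ρ ≠ 0 := ne_of_gt (Real.log_pos hρ)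
  rw [hs, Real.rpow_def_of_pos (by linarith : (0 : ℝ) < ρ)]
  have : Real.log ρ * (Real.log D.card / Real.log ρ) = Real.log D.card := by
    field_simp
  rw [this, Real.exp_log hc]

lemma s_nonneg (hρ : 1 < ρ) (hD0 : (0 : E) ∈ D) {s : ℝ}
    (hs : s = Real.log D.card / Real.log ρ) : 0 ≤ s := by
  have hc : (1 : ℝ) ≤ D.card := by
    exact_mod_cast Finset.card_pos.mpr ⟨0, hD0⟩
  rw [hs]
  exact div_nonneg (Real.log_nonneg hc) (Real.log_nonneg hρ.le)

lemma mu_bound' (hρ : 1 < ρ) (hsim : ∀ x : E, ‖Matrix.toEuclideanLin B x‖ = ρ * ‖x‖)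
    (hD0 : (0 : E) ∈ D) {s : ℝ} (hs : s = Real.log D.card / Real.log ρ)
    (A : Set E) (hA : MeasurableSet A) (hb : IsBounded A)
    (R : ℝ) (hR : 1 ≤ R) (hdR : Metric.diam A ≤ R) :
    selfAffineMeasure B D A ≤ ENNReal.ofReal ((ρ * R) ^ s) *
      ⨆ z : E, selfAffineMeasure B D (Metric.closedBall z 1) := by
  set k := ⌈Real.logb ρ R⌉₊ with hk
  have hρ0 : (0 : ℝ) < ρ := lt_trans one_pos hρ
  have hlogb0 : 0 ≤ Real.logb ρ R := Real.logb_nonneg hρ hR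
  have hR0 : (0 : ℝ) < R := by linarith
  have h1 : R ≤ ρ ^ k := by
    calc R = ρ ^ Real.logb ρ R := (Real.rpow_logb hρ0 (ne_of_gt hρ) hR0).symm
      _ ≤ ρ ^ ((k : ℕ) : ℝ) := Real.rpow_le_rpow_of_exponent_le hρ.le (Nat.le_ceil _)
      _ = ρ ^ k := Real.rpow_natCast ρ k
  have h2 : ρ ^ k ≤ ρ * R := by
    have hkk : ((k : ℕ) : ℝ) ≤ Real.logb ρ R + 1 := le_of_lt (Nat.ceil_lt_add_one hlogb0)
    calc ρ ^ k = ρ ^ ((k : ℕ) : ℝ) := (Real.rpow_natCast ρ k).symm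
      _ ≤ ρ ^ (Real.logb ρ R + 1) := Real.rpow_le_rpow_of_exponent_le hρ.le hkk
      _ = ρ ^ Real.logb ρ R * ρ := by rw [Real.rpow_add hρ0, Real.rpow_one]
      _ = R * ρ := by rw [Real.rpow_logb hρ0 (ne_of_gt hρ) hR0]
      _ = ρ * R := mul_comm _ _
  have hcast : (D.card : ℝ≥0∞) ^ k = ENNReal.ofReal ((ρ ^ k) ^ s) := by
    have hcs : ((ρ : ℝ) ^ k) ^ s = (D.card : ℝ) ^ k := by
      rw [← Real.rpow_natCast ρ k, ← Real.rpow_mul hρ0.le, mul_comm,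
        Real.rpow_mul hρ0.le, card_rpow D hρ hD0 hs, Real.rpow_natCast]
    rw [hcs, ENNReal.ofReal_pow (by positivity), ENNReal.ofReal_natCast]
  refine (mu_bound B D hρ hsim hD0 k A hA hb (hdR.trans h1)).trans ?_
  rw [hcast]
  refine mul_le_mul_left (ENNReal.ofReal_le_ofReal ?_) _
  exact Real.rpow_le_rpow (by positivity) h2 (s_nonneg D hρ hD0 hs)

lemma mu_le_dirac_of_zero (hn : n = 0) (hD0 : (0 : E) ∈ D) :
    selfAffineMeasure B D ≤ Measure.dirac (0 : E) := by
  haveI : Subsingleton E :=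
    ⟨fun a b => PiLp.ext fun i => ((by omega : ¬ (i : ℕ) < n) i.isLt).elim⟩
  haveI : Unique (D : Type _) := uniqueOfSubsingleton ⟨0, hD0⟩
  rw [selfAffine_eq]
  refine iSup_le fun N => ?_
  rw [Measure.le_iff]
  intro A hA
  rw [muN, Measure.sum_apply _ hA, tsum_fintype, Fintype.sum_unique]
  have hpt : (∑ j : Fin N, Matrix.toEuclideanLin (B ^ (j : ℕ))
      (((default : Fin N → D) j : E))) = (0 : E) := Subsingleton.elim _ _
  rw [hpt]

lemma cube_measurable (z : E) (N : ℝ) : MeasurableSet {y : E | ∀ i, |y i - z i| ≤ N / 2} := by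
  have : {y : E | ∀ i, |y i - z i| ≤ N / 2} = ⋂ i, {y : E | |y i - z i| ≤ N / 2} := by
    ext y; simp
  rw [this]
  refine MeasurableSet.iInter fun i => ?_
  have hcont : Continuous fun y : E => |y i - z i| :=
    (((EuclideanSpace.proj i).continuous).sub continuous_const).abs
  exact (isClosed_le hcont continuous_const).measurableSet

lemma cube_subset_ball (z : E) (N : ℝ) (hN : 0 ≤ N) :
    {y : E | ∀ i, |y i - z i| ≤ N / 2} ⊆ Metric.closedBall z ((n : ℝ) * N) := by
  intro y hy
  rw [Metric.mem_closedBall, EuclideanSpace.dist_eq]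
  have hsum : (∑ i, dist (y i) (z i) ^ 2) ≤ (n : ℝ) * (N / 2) ^ 2 := by
    have := Finset.sum_le_card_nsmul Finset.univ (fun i => dist (y i) (z i) ^ 2) ((N / 2) ^ 2)
      (fun i _ => by
        show dist (y i) (z i) ^ 2 ≤ (N / 2) ^ 2
        rw [Real.dist_eq]
        have h := hy i
        exact sq_le_sq' (by linarith [abs_nonneg (y i - z i), neg_abs_le (y i - z i)]) h)
    simpa [Finset.card_univ, nsmul_eq_mul] using this
  have hcase : (n : ℝ) * (N / 2) ^ 2 ≤ ((n : ℝ) * N) ^ 2 := by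
    rcases Nat.eq_zero_or_pos n with h | h
    · simp [h]
    · have h1 : (1 : ℝ) ≤ n := by exact_mod_cast h
      nlinarith [sq_nonneg N]
  calc √(∑ i, dist (y i) (z i) ^ 2) ≤ √(((n : ℝ) * N) ^ 2) :=
        Real.sqrt_le_sqrt (hsum.trans hcase)
    _ = (n : ℝ) * N := Real.sqrt_sq (by positivity)

lemma ball_subset_cube (z : E) (N : ℝ) (hN : 2 ≤ N) :
    Metric.closedBall z 1 ⊆ {y : E | ∀ i, |y i - z i| ≤ N / 2} := by
  intro y hy
  intro i
  have h1 : |y i - z i| ≤ dist y z := by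
    rw [EuclideanSpace.dist_eq]
    calc |y i - z i| = √((y i - z i) ^ 2) := (Real.sqrt_sq_eq_abs _).symm
      _ = √(dist (y i) (z i) ^ 2) := by rw [Real.dist_eq, sq_abs]
      _ ≤ √(∑ j, dist (y j) (z j) ^ 2) :=
          Real.sqrt_le_sqrt (Finset.single_le_sum
            (f := fun j => dist (y j) (z j) ^ 2) (fun j _ => sq_nonneg _) (Finset.mem_univ i))
  have h2 : dist y z ≤ 1 := Metric.mem_closedBall.mp hy
  linarith

variable {s : ℝ}

lemma beurling_le (hρ : 1 < ρ) (hsim : ∀ x : E, ‖Matrix.toEuclideanLin B x‖ = ρ * ‖x‖)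
    (hD0 : (0 : E) ∈ D) (hs : s = Real.log D.card / Real.log ρ) (hsn : s ≤ n) :
    beurlingUpper (selfAffineMeasure B D) ≤
      ENNReal.ofReal ((ρ * (2 * n + 1)) ^ s) *
        ⨆ z : E, selfAffineMeasure B D (Metric.closedBall z 1) := by
  set L := ⨆ z : E, selfAffineMeasure B D (Metric.closedBall z 1) with hLdef
  have hρ0 : (0 : ℝ) < ρ := lt_trans one_pos hρ
  have hs0 : 0 ≤ s := s_nonneg D hρ hD0 hs
  rw [beurlingUpper]
  refine Filter.limsup_le_of_le (by isBoundedDefault) ?_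
  filter_upwards [Filter.eventually_ge_atTop (1 : ℝ)] with N hN1
  refine iSup_le fun z => ?_
  set A := {y : E | ∀ i, |y i - z i| ≤ N / 2} with hAdef
  have hN0 : (0 : ℝ) ≤ N := by linarith
  have hA : MeasurableSet A := cube_measurable z N
  have hb : IsBounded A := (Metric.isBounded_closedBall).subset (cube_subset_ball z N hN0)
  set R : ℝ := (2 * n + 1) * N with hRdef
  have hR1 : (1 : ℝ) ≤ R := by
    have hcn : (0 : ℝ) ≤ (n : ℝ) := Nat.cast_nonneg n
    have : (1 : ℝ) ≤ 2 * (n : ℝ) + 1 := by linarith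
    nlinarith
  have hdiam : Metric.diam A ≤ R := by
    calc Metric.diam A ≤ Metric.diam (Metric.closedBall z ((n : ℝ) * N)) :=
          Metric.diam_mono (cube_subset_ball z N hN0) Metric.isBounded_closedBall
      _ ≤ 2 * ((n : ℝ) * N) := Metric.diam_closedBall (by positivity)
      _ ≤ R := by rw [hRdef]; nlinarith
  have h := mu_bound' B D hρ hsim hD0 hs A hA hb R hR1 hdiam
  have hsplit : (ρ * R) ^ s ≤ (ρ * (2 * n + 1)) ^ s * N ^ (n : ℕ) := by
    have h1 : (ρ * R) ^ s = (ρ * (2 * n + 1)) ^ s * N ^ s := by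
      rw [hRdef, ← mul_assoc, Real.mul_rpow (by positivity) hN0]
    have h2 : N ^ s ≤ N ^ (n : ℕ) := by
      calc N ^ s ≤ N ^ ((n : ℕ) : ℝ) := Real.rpow_le_rpow_of_exponent_le hN1 hsn
        _ = N ^ (n : ℕ) := Real.rpow_natCast N n
    rw [h1]
    exact mul_le_mul_of_nonneg_left h2 (by positivity)
  refine ENNReal.div_le_of_le_mul ?_
  calc selfAffineMeasure B D A ≤ ENNReal.ofReal ((ρ * R) ^ s) * L := h
    _ ≤ ENNReal.ofReal ((ρ * (2 * n + 1)) ^ s * N ^ (n : ℕ)) * L :=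
        mul_le_mul_left (ENNReal.ofReal_le_ofReal hsplit) _
    _ = ENNReal.ofReal ((ρ * (2 * n + 1)) ^ s) * ENNReal.ofReal (N ^ (n : ℕ)) * L := by
        rw [ENNReal.ofReal_mul (by positivity)]
    _ = ENNReal.ofReal ((ρ * (2 * n + 1)) ^ s) * L * ENNReal.ofReal (N ^ (n : ℕ)) := by
        ring

lemma sdensity_le (hρ : 1 < ρ) (hsim : ∀ x : E, ‖Matrix.toEuclideanLin B x‖ = ρ * ‖x‖)
    (hD0 : (0 : E) ∈ D) (hs : s = Real.log D.card / Real.log ρ) :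
    upperSDensity s (selfAffineMeasure B D) ≤
      ENNReal.ofReal (ρ ^ s) *
        ⨆ z : E, selfAffineMeasure B D (Metric.closedBall z 1) := by
  set L := ⨆ z : E, selfAffineMeasure B D (Metric.closedBall z 1) with hLdef
  have hρ0 : (0 : ℝ) < ρ := lt_trans one_pos hρ
  rw [upperSDensity]
  refine Filter.limsup_le_of_le (by isBoundedDefault) ?_
  filter_upwards [Filter.eventually_ge_atTop (1 : ℝ)] with r hr1
  refine iSup_le fun U => iSup_le fun hc => iSup_le fun _ => iSup_le fun hdiam => ?_
  have hb : IsBounded U := hc.isBounded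
  have hA : MeasurableSet U := hc.isClosed.measurableSet
  set R : ℝ := Metric.diam U with hRdef
  have hR1 : (1 : ℝ) ≤ R := le_trans hr1 hdiam
  have hR0 : (0 : ℝ) < R := by linarith
  have h := mu_bound' B D hρ hsim hD0 hs U hA hb R hR1 le_rfl
  have hed : EMetric.diam U = ENNReal.ofReal R := (ENNReal.ofReal_toReal hb.ediam_ne_top).symm
  rw [hed, ENNReal.ofReal_rpow_of_pos hR0]
  refine ENNReal.div_le_of_le_mul ?_
  calc selfAffineMeasure B D U ≤ ENNReal.ofReal ((ρ * R) ^ s) * L := h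
    _ = ENNReal.ofReal (ρ ^ s) * ENNReal.ofReal (R ^ s) * L := by
        rw [Real.mul_rpow hρ0.le hR0.le, ENNReal.ofReal_mul (by positivity)]
    _ = ENNReal.ofReal (ρ ^ s) * L * ENNReal.ofReal (R ^ s) := by ring

lemma beurling_top
    (hL : (⨆ z : E, selfAffineMeasure B D (Metric.closedBall z 1)) = ⊤) :
    beurlingUpper (selfAffineMeasure B D) = ⊤ := by
  rw [beurlingUpper]
  have hev : ∀ᶠ N : ℝ in atTop,
      (⨆ z : E, selfAffineMeasure B D {y | ∀ i, |y i - z i| ≤ N / 2}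
        / ENNReal.ofReal (N ^ n)) = ⊤ := by
    filter_upwards [Filter.eventually_ge_atTop (2 : ℝ)] with N hN2
    refine top_le_iff.mp ?_
    have h1 : (⨆ z : E, selfAffineMeasure B D (Metric.closedBall z 1)
        / ENNReal.ofReal (N ^ n)) = ⊤ := by
      rw [← ENNReal.iSup_div, hL, ENNReal.top_div_of_ne_top ENNReal.ofReal_ne_top]
    rw [← h1]
    exact iSup_mono fun z => ENNReal.div_le_div_right
      (measure_mono (ball_subset_cube z N hN2)) _
  rw [Filter.limsup_congr hev]
  exact Filter.limsup_const _

lemma sdensity_top (hn : 0 < n) (hρ : 1 < ρ) (hD0 : (0 : E) ∈ D)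
    (hs : s = Real.log D.card / Real.log ρ)
    (hL : (⨆ z : E, selfAffineMeasure B D (Metric.closedBall z 1)) = ⊤) :
    upperSDensity s (selfAffineMeasure B D) = ⊤ := by
  have hs0 : 0 ≤ s := s_nonneg D hρ hD0 hs
  rw [upperSDensity]
  have hev : ∀ᶠ r : ℝ in atTop,
      (⨆ (U : Set E) (_ : IsCompact U) (_ : Convex ℝ U) (_ : r ≤ Metric.diam U),
        selfAffineMeasure B D U / EMetric.diam U ^ s) = ⊤ := by
    filter_upwards [Filter.eventually_ge_atTop (1 : ℝ)] with r hr1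
    have hr0 : (0 : ℝ) ≤ r := by linarith
    refine top_le_iff.mp ?_
    have h1 : (⨆ z : E, selfAffineMeasure B D (Metric.closedBall z 1)
        / ENNReal.ofReal ((2 * r) ^ s)) = ⊤ := by
      rw [← ENNReal.iSup_div, hL, ENNReal.top_div_of_ne_top ENNReal.ofReal_ne_top]
    rw [← h1]
    refine iSup_le fun z => ?_
    have hdiam : r ≤ Metric.diam (Metric.closedBall z r) := by
      set u : E := EuclideanSpace.single (⟨0, hn⟩ : Fin n) (1 : ℝ) with hu
      have hnorm : ‖u‖ = 1 := by rw [hu, EuclideanSpace.norm_single]; norm_num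
      have hd : dist (z + r • u) z = r := by
        rw [dist_eq_norm, add_sub_cancel_left, norm_smul, hnorm, Real.norm_eq_abs,
          abs_of_nonneg hr0, mul_one]
      have hmem1 : z + r • u ∈ Metric.closedBall z r := by
        rw [Metric.mem_closedBall, hd]
      have hmem2 : z ∈ Metric.closedBall z r := Metric.mem_closedBall_self hr0
      calc r = dist (z + r • u) z := hd.symm
        _ ≤ Metric.diam (Metric.closedBall z r) :=
            Metric.dist_le_diam_of_mem Metric.isBounded_closedBall hmem1 hmem2
    have hval : selfAffineMeasure B D (Metric.closedBall z 1) / ENNReal.ofReal ((2 * r) ^ s)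
        ≤ selfAffineMeasure B D (Metric.closedBall z r)
            / EMetric.diam (Metric.closedBall z r) ^ s := by
      refine ENNReal.div_le_div
        (measure_mono (Metric.closedBall_subset_closedBall hr1)) ?_
      have h2 : EMetric.diam (Metric.closedBall z r) ≤ ENNReal.ofReal (2 * r) := by
        show Metric.ediam (Metric.closedBall z r) ≤ ENNReal.ofReal (2 * r)
        rw [(ENNReal.ofReal_toReal (Metric.isBounded_closedBall (x := z)
          (r := r)).ediam_ne_top).symm]
        exact ENNReal.ofReal_le_ofReal (Metric.diam_closedBall hr0)
      calc EMetric.diam (Metric.closedBall z r) ^ s ≤ ENNReal.ofReal (2 * r) ^ s :=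
            ENNReal.rpow_le_rpow h2 hs0
        _ = ENNReal.ofReal ((2 * r) ^ s) := ENNReal.ofReal_rpow_of_pos (by linarith)
    refine hval.trans ?_
    exact le_iSup_of_le (Metric.closedBall z r)
      (le_iSup_of_le (isCompact_closedBall z r)
        (le_iSup_of_le (convex_closedBall z r) (le_iSup_of_le hdiam le_rfl)))
  rw [Filter.limsup_congr hev]
  exact Filter.limsup_const _

end SelfAffineAux


/-- **Corollary.** Let `B` be an `n×n` similarity matrix with scaling factor `ρ > 1` and let
`D ⊆ ℝⁿ` be finite with `0 ∈ D`, whose similarity dimension `s = log(card D)/log ρ` satisfies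
`s ≤ n`. Then `D⁺(μ) = ∞` if and only if `E_s⁺(μ) = ∞`. -/
theorem upperBeurling_top_iff_upperSDensity_top {n : ℕ} (B : Matrix (Fin n) (Fin n) ℝ) (ρ : ℝ)
    (hρ : 1 < ρ) (hsim : ∀ x : EuclideanSpace ℝ (Fin n), ‖Matrix.toEuclideanLin B x‖ = ρ * ‖x‖)
    (D : Finset (EuclideanSpace ℝ (Fin n))) (hD0 : (0 : EuclideanSpace ℝ (Fin n)) ∈ D)
    (s : ℝ) (hs : s = Real.log D.card / Real.log ρ) (hsn : s ≤ n) :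
    beurlingUpper (selfAffineMeasure B D) = ⊤ ↔
      upperSDensity s (selfAffineMeasure B D) = ⊤ := by
  constructor
  · intro hB
    have hL : (⨆ z : EuclideanSpace ℝ (Fin n),
        selfAffineMeasure B D (Metric.closedBall z 1)) = ⊤ := by
      by_contra hLne
      have h := SelfAffineAux.beurling_le B D hρ hsim hD0 hs hsn
      exact absurd hB (h.trans_lt (ENNReal.mul_lt_top
        (lt_top_iff_ne_top.mpr ENNReal.ofReal_ne_top) (lt_top_iff_ne_top.mpr hLne))).ne
    rcases Nat.eq_zero_or_pos n with hn | hn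
    · exfalso
      have h1 : (⨆ z : EuclideanSpace ℝ (Fin n),
          selfAffineMeasure B D (Metric.closedBall z 1)) ≤ 1 := by
        refine iSup_le fun z => ?_
        calc selfAffineMeasure B D (Metric.closedBall z 1)
            ≤ Measure.dirac (0 : EuclideanSpace ℝ (Fin n)) (Metric.closedBall z 1) :=
              Measure.le_iff'.mp (SelfAffineAux.mu_le_dirac_of_zero B D hn hD0) _
          _ ≤ Measure.dirac (0 : EuclideanSpace ℝ (Fin n)) Set.univ :=
              measure_mono (Set.subset_univ _)
          _ = 1 := measure_univ
      rw [hL] at h1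
      exact ENNReal.one_ne_top (top_le_iff.mp h1)
    · exact SelfAffineAux.sdensity_top B D hn hρ hD0 hs hL
  · intro hE
    have hL : (⨆ z : EuclideanSpace ℝ (Fin n),
        selfAffineMeasure B D (Metric.closedBall z 1)) = ⊤ := by
      by_contra hLne
      have h := SelfAffineAux.sdensity_le B D hρ hsim hD0 hs
      exact absurd hE (h.trans_lt (ENNReal.mul_lt_top
        (lt_top_iff_ne_top.mpr ENNReal.ofReal_ne_top) (lt_top_iff_ne_top.mpr hLne))).ne
    exact SelfAffineAux.beurling_top B D hL
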